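/- Let n ≥ 2 and let u be a convex continuous function on the open ball B₂ ⊂ ℝⁿ of radius 2 centered at the origin, such that u ≥ 0 in B₂, u = 0 on the slice {x ∈ B₂ : x_n = 0}, and u(t·e_n)/t → 0 as t → 0⁺. Then for every M > 0 there exists h₀ > 0 such that for all h ∈ (0, h₀), the open cylinder Q = {x = (x', x_n) ∈ ℝⁿ⁻¹ × ℝ : |x'| < 1, 0 < x_n < M·h} is contained in B₂ and u < h on Q. In particular, for every h > 0 small, the sublevel set {u < h} contains a cylinder {|x'| < 1} × (0, H) with h/H → 0 as h → 0⁺. -/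

import Mathlib

open scoped Topology

/-- A nonnegative convex function on `B₂` vanishing on `{x_n = 0}` with
`u(t·e_n)/t → 0` as `t → 0⁺` is less than `h` on cylinders
`{|x'| < 1} × (0, M·h)` for all small `h > 0`. -/
theorem sublevel_contains_cylinder {n : ℕ} (hn : 2 ≤ n)
    (u : EuclideanSpace ℝ (Fin n) → ℝ)
    (huconv : ConvexOn ℝ (Metric.ball 0 2) u)
    (hucont : ContinuousOn u (Metric.ball 0 2))
    (hnonneg : ∀ x ∈ Metric.ball (0 : EuclideanSpace ℝ (Fin n)) 2, 0 ≤ u x)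
    (hslice : ∀ x ∈ Metric.ball (0 : EuclideanSpace ℝ (Fin n)) 2,
      x (⟨n - 1, by omega⟩ : Fin n) = 0 → u x = 0)
    (hlittleo : Filter.Tendsto
      (fun t : ℝ => u (t • EuclideanSpace.single (⟨n - 1, by omega⟩ : Fin n) 1) / t)
      (𝓝[>] (0 : ℝ)) (𝓝 0)) :
    ∀ M : ℝ, 0 < M → ∃ h₀ : ℝ, 0 < h₀ ∧ ∀ h : ℝ, 0 < h → h < h₀ →
      ∀ x : EuclideanSpace ℝ (Fin n),
        (∑ j ∈ Finset.univ.erase (⟨n - 1, by omega⟩ : Fin n), (x j) ^ 2) < 1 →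
        0 < x (⟨n - 1, by omega⟩ : Fin n) →
        x (⟨n - 1, by omega⟩ : Fin n) < M * h →
        x ∈ Metric.ball (0 : EuclideanSpace ℝ (Fin n)) 2 ∧ u x < h := by
  intro M hM
  set i : Fin n := ⟨n - 1, by omega⟩ with hi
  set e : EuclideanSpace ℝ (Fin n) := EuclideanSpace.single i 1 with he
  have hev : ∀ᶠ t in 𝓝[>] (0:ℝ), dist (u (t • e) / t) 0 < 1/(2*M) :=
    Metric.tendsto_nhds.mp hlittleo (1/(2*M)) (by positivity)
  have hev2 : Set.Ioo (0:ℝ) 2 ∈ 𝓝[>] (0:ℝ) := Ioo_mem_nhdsGT_of_mem (by norm_num)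
  obtain ⟨s, hs1, hs0, hs2⟩ := (hev.and hev2).exists
  rw [Real.dist_eq, sub_zero] at hs1
  have huse : u (s • e) / s < 1/(2*M) := lt_of_le_of_lt (le_abs_self _) hs1
  refine ⟨s / (2*M), by positivity, ?_⟩
  intro h hh hhh x hx1 hx2 hx3
  have hxis : x i < s / 2 := by
    have : M * h < s / 2 := by
      have := (mul_lt_mul_iff_right₀ hM).mpr hhh
      calc M * h < M * (s / (2*M)) := this
        _ = s / 2 := by field_simp
    linarith
  have hxi1 : x i < 1 := by linarith
  -- membership of x in ball
  have hsumx : ∑ j, ‖x j‖ ^ 2 < 2 := by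
    have hsplit := Finset.sum_erase_add Finset.univ (fun j => ‖x j‖^2) (Finset.mem_univ i)
    simp only [Real.norm_eq_abs, sq_abs] at hsplit ⊢
    nlinarith [hx1, hx2, hxi1]
  have hxball : x ∈ Metric.ball (0 : EuclideanSpace ℝ (Fin n)) 2 := by
    rw [mem_ball_zero_iff, EuclideanSpace.norm_eq]
    rw [Real.sqrt_lt' (by norm_num : (0:ℝ) < 2)]
    nlinarith [hsumx]
  refine ⟨hxball, ?_⟩
  -- convex combination
  set lam : ℝ := x i / s with hlam
  have hlam0 : 0 < lam := div_pos hx2 hs0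
  have hlamh : lam < 1/2 := by
    rw [hlam, div_lt_iff₀ hs0]; linarith
  set c : ℝ := 1 - lam with hc
  have hc0 : (1:ℝ)/2 < c := by simp [hc]; linarith
  have hcpos : 0 < c := by linarith
  set v : EuclideanSpace ℝ (Fin n) := x - (x i) • e with hv
  set q : EuclideanSpace ℝ (Fin n) := c⁻¹ • v with hq
  have hvj : ∀ j, j ≠ i → v j = x j := by
    intro j hj
    simp [hv, he, PiLp.sub_apply, PiLp.smul_apply, EuclideanSpace.single_apply, hj]
  have hvi : v i = 0 := by
    simp [hv, he, PiLp.sub_apply, PiLp.smul_apply, EuclideanSpace.single_apply]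
  have hvnorm : ‖v‖ < 1 := by
    rw [EuclideanSpace.norm_eq, Real.sqrt_lt' (by norm_num : (0:ℝ) < 1)]
    have hsplit := Finset.sum_erase_add Finset.univ (fun j => ‖v j‖^2) (Finset.mem_univ i)
    have heq : ∑ j ∈ Finset.univ.erase i, ‖v j‖^2 = ∑ j ∈ Finset.univ.erase i, (x j)^2 := by
      apply Finset.sum_congr rfl
      intro j hj
      rw [hvj j (Finset.ne_of_mem_erase hj), Real.norm_eq_abs, sq_abs]
    rw [← hsplit, heq]
    simpa [hvi] using hx1
  have hqnorm : ‖q‖ < 2 := by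
    rw [hq, norm_smul, Real.norm_eq_abs, abs_inv, abs_of_pos hcpos]
    calc c⁻¹ * ‖v‖ ≤ c⁻¹ * 1 := by
          apply mul_le_mul_of_nonneg_left hvnorm.le (by positivity)
      _ = c⁻¹ := mul_one _
      _ < 2 := by
          rw [inv_lt_comm₀ (by positivity) (by norm_num)]
          linarith
  have hqball : q ∈ Metric.ball (0 : EuclideanSpace ℝ (Fin n)) 2 :=
    mem_ball_zero_iff.mpr hqnorm
  have hqi : q i = 0 := by
    simp [hq, PiLp.smul_apply, hvi]
  have huq : u q = 0 := hslice q hqball hqi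
  have hseball : s • e ∈ Metric.ball (0 : EuclideanSpace ℝ (Fin n)) 2 := by
    rw [mem_ball_zero_iff, norm_smul, Real.norm_eq_abs, abs_of_pos hs0, he,
      EuclideanSpace.norm_single]
    simpa using hs2
  have hcomb : lam • (s • e) + c • q = x := by
    rw [hq, smul_inv_smul₀ (ne_of_gt hcpos), hv, smul_smul, hlam,
      div_mul_cancel₀ _ (ne_of_gt hs0)]
    abel
  have hconv := huconv.2 hseball hqball hlam0.le hcpos.le (by rw [hc]; ring)
  rw [hcomb] at hconv
  simp only [smul_eq_mul, huq, mul_zero, add_zero] at hconv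
  -- hconv : u x ≤ lam * u (s • e)
  have huse0 : 0 ≤ u (s • e) := hnonneg _ hseball
  have : lam * u (s • e) < h := by
    have h1 : u (s • e) < s / (2*M) := by
      rw [div_lt_iff₀ hs0] at huse
      calc u (s • e) < 1/(2*M) * s := huse
        _ = s / (2*M) := by ring
    calc lam * u (s • e) = x i * (u (s • e) / s) := by
          rw [hlam]; field_simp
      _ ≤ x i * (1/(2*M)) := by
          apply mul_le_mul_of_nonneg_left huse.le hx2.le
      _ < M * h * (1/(2*M)) := by
          apply mul_lt_mul_of_pos_right hx3 (by positivity)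
      _ = h / 2 := by field_simp
      _ < h := by linarith
  linarith
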